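/- Suppose d_i = h_i for all i ∈ {1,…,n}. Then every solution T ∈ R^{n×n} for (d_1,…,d_n) is unimodular, and T·A is in Hermite form (in particular (T·A)_{ij} = 0 for all i > j); moreover any two solutions T, T′ for (d_1,…,d_n) differ by left multiplication by a diagonal matrix whose diagonal entries are units of R of degree 0, i.e. T′ = D·T for such a diagonal matrix D. -/
import Mathlib

lemma wb_bot_of_add_lt (x : WithBot ℕ) (m : ℕ) (hx : x + (m : WithBot ℕ) < (m : WithBot ℕ)) : x = ⊥ := by
  rw [Nat.cast_withBot] at hx
  cases x with
  | bot => rfl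
  | coe a =>
    exfalso
    rw [← WithBot.coe_add] at hx
    have h2 : a + m < m := WithBot.coe_lt_coe.mp hx
    omega

lemma wb_zero_of_add_eq (x : WithBot ℕ) (m : ℕ) (hx : x + (m : WithBot ℕ) = (m : WithBot ℕ)) : x = 0 := by
  rw [Nat.cast_withBot] at hx
  cases x with
  | bot => simp at hx
  | coe a =>
    rw [← WithBot.coe_add] at hx
    have h2 : a + m = m := WithBot.coe_inj.mp hx
    have ha : a = 0 := by omega
    simp [ha]

lemma wb_eq_zero_of_add_eq_zero (x y : WithBot ℕ) (hx : x + y = 0) : x = 0 ∧ y = 0 := by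
  cases x with
  | bot => simp at hx
  | coe a =>
    cases y with
    | bot => simp at hx
    | coe b =>
      rw [← WithBot.coe_add] at hx
      have h2 : a + b = 0 := WithBot.coe_inj.mp (hx.trans (rfl : (0 : WithBot ℕ) = ((0:ℕ) : WithBot ℕ)))
      have hab : a = 0 ∧ b = 0 := by omega
      exact ⟨by rw [hab.1]; rfl, by rw [hab.2]; rfl⟩

section Deg

variable {R : Type*} [Ring R] [Nontrivial R] [NoZeroDivisors R]
    (degD : R → WithBot ℕ)
    (hbot : ∀ r : R, degD r = ⊥ ↔ r = 0)
    (hmul : ∀ r s : R, degD (r * s) = degD r + degD s)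
    (hadd : ∀ r s : R, degD (r + s) ≤ max (degD r) (degD s))

include hbot hmul in
lemma deg_one : degD (1 : R) = 0 := by
  have h1 : degD (1 : R) = degD 1 + degD 1 := by rw [← hmul 1 1, one_mul]
  have hb : degD (1 : R) ≠ ⊥ := fun hb => one_ne_zero ((hbot 1).mp hb)
  cases hd : degD (1 : R) with
  | bot => exact absurd hd hb
  | coe a =>
    rw [hd, ← WithBot.coe_add] at h1
    have := WithBot.coe_inj.mp h1
    have ha : a = 0 := by omega
    rw [ha]; rfl

include hbot hmul in
lemma deg_neg (r : R) : degD (-r) = degD r := by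
  have hm1 : degD (-1 : R) = 0 := by
    have h1 : degD (1 : R) = degD (-1) + degD (-1) := by
      rw [← hmul (-1) (-1), neg_one_mul, neg_neg]
    rw [deg_one degD hbot hmul] at h1
    exact (wb_eq_zero_of_add_eq_zero _ _ h1.symm).1
  calc degD (-r) = degD ((-1) * r) := by rw [neg_one_mul]
    _ = 0 + degD r := by rw [hmul, hm1]
    _ = degD r := by rw [zero_add]

include hbot hmul hadd in
lemma deg_sub (r s : R) : degD (r - s) ≤ max (degD r) (degD s) := by
  rw [sub_eq_add_neg]
  have := hadd r (-s)
  rwa [deg_neg degD hbot hmul] at this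

/-- The key triangularity lemma. -/
lemma key_diag {n : ℕ} (h : Fin n → ℕ) (B C M : Matrix (Fin n) (Fin n) R)
    (hbot : ∀ r : R, degD r = ⊥ ↔ r = 0)
    (hmul : ∀ r s : R, degD (r * s) = degD r + degD s)
    (hadd : ∀ r s : R, degD (r + s) ≤ max (degD r) (degD s))
    (hMB : M * B = C)
    (hBlow : ∀ k j : Fin n, j < k → B k j = 0)
    (hBdiag : ∀ j, degD (B j j) = ((h j : ℕ) : WithBot ℕ))
    (hBoff : ∀ i j : Fin n, i ≠ j → degD (B i j) < ((h j : ℕ) : WithBot ℕ))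
    (hCdiag : ∀ i, degD (C i i) = ((h i : ℕ) : WithBot ℕ))
    (hCoff : ∀ i j : Fin n, i ≠ j → degD (C i j) < ((h j : ℕ) : WithBot ℕ)) :
    (∀ i k : Fin n, k ≠ i → M i k = 0) ∧ (∀ i, degD (M i i) = 0) := by
  have main : ∀ i : Fin n, ∀ kv : ℕ, ∀ k : Fin n, k.val = kv →
      ((k ≠ i → M i k = 0) ∧ (k = i → degD (M i i) = 0)) := by
    intro i kv
    induction kv using Nat.strong_induction_on with
    | _ kv IH =>
      intro k hk
      subst hk
      have hMlt : ∀ m : Fin n, m < k → m ≠ i → M i m = 0 :=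
        fun m hm hmi => ((IH m.val hm m rfl).1 hmi)
      have hC : C i k = ∑ m : Fin n, M i m * B m k := by
        rw [← hMB, Matrix.mul_apply]
      rcases lt_trichotomy k i with hki | hki | hki
      · -- k < i : show M i k = 0
        have hsum : C i k = M i k * B k k := by
          rw [hC]
          apply Finset.sum_eq_single k
          · intro m _ hm
            rcases lt_or_gt_of_ne hm with hmk | hmk
            · rw [hMlt m hmk (ne_of_lt (hmk.trans hki)), zero_mul]
            · rw [hBlow m k hmk, mul_zero]
          · intro habs; exact absurd (Finset.mem_univ k) habs
        have hdeg : degD (M i k) + ((h k : ℕ) : WithBot ℕ) < ((h k : ℕ) : WithBot ℕ) := by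
          have h0 := hCoff i k (ne_of_gt hki)
          rwa [hsum, hmul, hBdiag] at h0
        have := wb_bot_of_add_lt _ _ hdeg
        refine ⟨fun _ => (hbot _).mp this, fun hke => absurd hke (ne_of_lt hki)⟩
      · -- k = i
        subst hki
        have hsum : C k k = M k k * B k k := by
          rw [hC]
          apply Finset.sum_eq_single k
          · intro m _ hm
            rcases lt_or_gt_of_ne hm with hmk | hmk
            · rw [hMlt m hmk hm, zero_mul]
            · rw [hBlow m k hmk, mul_zero]
          · intro habs; exact absurd (Finset.mem_univ k) habs
        have hdeg : degD (M k k) + ((h k : ℕ) : WithBot ℕ) = ((h k : ℕ) : WithBot ℕ) := by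
          have h0 := hCdiag k
          rwa [hsum, hmul, hBdiag] at h0
        exact ⟨fun hne => absurd rfl hne, fun _ => wb_zero_of_add_eq _ _ hdeg⟩
      · -- i < k : show M i k = 0
        have hMii : degD (M i i) = 0 := (IH i.val hki i rfl).2 rfl
        have hik : i ≠ k := ne_of_lt hki
        have hzero : ∀ m ∈ Finset.univ, m ∉ ({i, k} : Finset (Fin n)) → M i m * B m k = 0 := by
          intro m _ hm
          simp only [Finset.mem_insert, Finset.mem_singleton, not_or] at hm
          rcases lt_or_gt_of_ne hm.2 with hmk | hmk
          · rw [hMlt m hmk hm.1, zero_mul]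
          · rw [hBlow m k hmk, mul_zero]
        have hsum : C i k = M i i * B i k + M i k * B k k := by
          rw [hC, ← Finset.sum_subset (Finset.subset_univ ({i, k} : Finset (Fin n))) hzero,
            Finset.sum_pair hik]
        have hexpr : M i k * B k k = C i k - M i i * B i k := by
          rw [hsum, add_sub_cancel_left]
        have hd1 : degD (C i k) < ((h k : ℕ) : WithBot ℕ) := hCoff i k hik
        have hd2 : degD (M i i * B i k) < ((h k : ℕ) : WithBot ℕ) := by
          rw [hmul, hMii, zero_add]
          exact hBoff i k hik
        have hdeg : degD (M i k) + ((h k : ℕ) : WithBot ℕ) < ((h k : ℕ) : WithBot ℕ) := by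
          have h0 : degD (M i k * B k k) < ((h k : ℕ) : WithBot ℕ) := by
            rw [hexpr]
            exact lt_of_le_of_lt (deg_sub degD hbot hmul hadd _ _) (max_lt hd1 hd2)
          rwa [hmul, hBdiag] at h0
        have := wb_bot_of_add_lt _ _ hdeg
        exact ⟨fun _ => (hbot _).mp this, fun hke => absurd hke (ne_of_gt hki)⟩
  exact ⟨fun i k hk => (main i k.val k rfl).1 hk, fun i => (main i i.val i rfl).2 rfl⟩

end Deg


/-- (Uniqueness part of the degree-constraint system.)
With `A ∈ R^{n×n}` of full left row rank, `degD A_{ij} ≤ d`, Hermite form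
`H = U·A` with diagonal degrees `h_i = degD H_{ii}`: if `d_i = h_i` for all
`i`, then every solution `T` of the system (2) is unimodular and `T·A` is in
Hermite form (in particular lower entries vanish); moreover any two
solutions differ by left multiplication by a diagonal matrix whose diagonal
entries are units of degree `0`. -/
theorem stmt15
    {R : Type*} [Ring R] [Nontrivial R] [NoZeroDivisors R]
    (degD : R → WithBot ℕ)
    (hbot : ∀ r : R, degD r = ⊥ ↔ r = 0)
    (hmul : ∀ r s : R, degD (r * s) = degD r + degD s)
    (hadd : ∀ r s : R, degD (r + s) ≤ max (degD r) (degD s))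
    (hunit : ∀ r : R, degD r = 0 → IsUnit r)
    (hdivision : ∀ f g : R, g ≠ 0 → ∃ q rem : R, f = q * g + rem ∧ degD rem < degD g)
    {n : ℕ} (d : ℕ) (A U H : Matrix (Fin n) (Fin n) R)
    (hrank : ∀ b : Fin n → R, Matrix.vecMul b A = 0 → b = 0)
    (hAd : ∀ i j : Fin n, degD (A i j) ≤ ((d : ℕ) : WithBot ℕ))
    (hUuni : ∃ V : Matrix (Fin n) (Fin n) R, U * V = 1 ∧ V * U = 1)
    (hHut : ∀ i j : Fin n, j < i → H i j = 0)
    (hHdiag : ∀ i : Fin n, H i i ≠ 0)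
    (hHdeg : ∀ i j : Fin n, i < j → degD (H i j) < degD (H j j))
    (hUA : U * A = H)
    (h dvec : Fin n → ℕ)
    (hh : ∀ i : Fin n, degD (H i i) = ((h i : ℕ) : WithBot ℕ))
    (heq : ∀ i : Fin n, dvec i = h i) :
    (∀ T : Matrix (Fin n) (Fin n) R,
      ((∀ i : Fin n, (T * A) i i ≠ 0 ∧ degD ((T * A) i i) = ((dvec i : ℕ) : WithBot ℕ)) ∧
       (∀ i j : Fin n, i ≠ j → degD ((T * A) i j) < ((dvec j : ℕ) : WithBot ℕ))) →
      ((∃ V : Matrix (Fin n) (Fin n) R, T * V = 1 ∧ V * T = 1) ∧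
       (∀ i j : Fin n, j < i → (T * A) i j = 0) ∧
       (∀ i : Fin n, (T * A) i i ≠ 0) ∧
       (∀ i j : Fin n, i < j → degD ((T * A) i j) < degD ((T * A) j j)))) ∧
    (∀ T T' : Matrix (Fin n) (Fin n) R,
      ((∀ i : Fin n, (T * A) i i ≠ 0 ∧ degD ((T * A) i i) = ((dvec i : ℕ) : WithBot ℕ)) ∧
       (∀ i j : Fin n, i ≠ j → degD ((T * A) i j) < ((dvec j : ℕ) : WithBot ℕ))) →
      ((∀ i : Fin n, (T' * A) i i ≠ 0 ∧ degD ((T' * A) i i) = ((dvec i : ℕ) : WithBot ℕ)) ∧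
       (∀ i j : Fin n, i ≠ j → degD ((T' * A) i j) < ((dvec j : ℕ) : WithBot ℕ))) →
      ∃ D : Matrix (Fin n) (Fin n) R,
        (∀ i j : Fin n, i ≠ j → D i j = 0) ∧
        (∀ i : Fin n, IsUnit (D i i) ∧ degD (D i i) = 0) ∧
        T' = D * T) := by
  obtain ⟨V, hUV, hVU⟩ := hUuni
  -- properties of H as "B" in the key lemma
  have hBdiag : ∀ j : Fin n, degD (H j j) = ((h j : ℕ) : WithBot ℕ) := hh
  have hBoff : ∀ i j : Fin n, i ≠ j → degD (H i j) < ((h j : ℕ) : WithBot ℕ) := by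
    intro i j hij
    rcases lt_or_gt_of_ne hij with hlt | hgt
    · have := hHdeg i j hlt
      rwa [hh j] at this
    · rw [(hbot _).mpr (hHut i j hgt), Nat.cast_withBot]
      exact WithBot.bot_lt_coe _
  -- the main structural fact for any solution T
  have struct : ∀ T : Matrix (Fin n) (Fin n) R,
      ((∀ i : Fin n, (T * A) i i ≠ 0 ∧ degD ((T * A) i i) = ((dvec i : ℕ) : WithBot ℕ)) ∧
       (∀ i j : Fin n, i ≠ j → degD ((T * A) i j) < ((dvec j : ℕ) : WithBot ℕ))) →
      ((∀ i k : Fin n, k ≠ i → (T * V) i k = 0) ∧ (∀ i, degD ((T * V) i i) = 0) ∧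
        (T * V) * U = T ∧ (T * V) * H = T * A) := by
    intro T ⟨hT1, hT2⟩
    have hSU : (T * V) * U = T := by
      rw [mul_assoc, hVU, mul_one]
    have hSH : (T * V) * H = T * A := by
      rw [← hUA, ← mul_assoc, hSU]
    have hCdiag : ∀ i : Fin n, degD ((T * A) i i) = ((h i : ℕ) : WithBot ℕ) := by
      intro i; rw [← heq i]; exact (hT1 i).2
    have hCoff : ∀ i j : Fin n, i ≠ j → degD ((T * A) i j) < ((h j : ℕ) : WithBot ℕ) := by
      intro i j hij; rw [← heq j]; exact hT2 i j hij
    obtain ⟨hoff, hdiag⟩ := key_diag degD h H (T * A) (T * V) hbot hmul hadd hSH hHut hBdiag hBoff hCdiag hCoff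
    exact ⟨hoff, hdiag, hSU, hSH⟩
  constructor
  · -- first part
    intro T hsol
    obtain ⟨hoff, hdiag, hSU, hSH⟩ := struct T hsol
    set S := T * V with hSdef
    -- diagonal entries are units
    have hu : ∀ i, IsUnit (S i i) := fun i => hunit _ (hdiag i)
    -- S equals a diagonal matrix
    have hSdiagmat : S = Matrix.diagonal (fun i => S i i) := by
      ext i j
      by_cases hij : i = j
      · subst hij; rw [Matrix.diagonal_apply_eq]
      · rw [Matrix.diagonal_apply_ne _ hij]
        exact hoff i j (fun hc => hij hc.symm)
    -- inverse diagonal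
    set g : Fin n → R := fun i => ((hu i).unit⁻¹ : Rˣ) with hgdef
    have hg1 : ∀ i, S i i * g i = 1 := by
      intro i
      have := (hu i).unit.mul_inv
      rwa [(hu i).unit_spec] at this
    have hg2 : ∀ i, g i * S i i = 1 := by
      intro i
      have := (hu i).unit.inv_mul
      rwa [(hu i).unit_spec] at this
    refine ⟨⟨V * Matrix.diagonal g, ?_, ?_⟩, ?_, fun i => (hsol.1 i).1, ?_⟩
    · -- T * (V * diagonal g) = 1
      calc T * (V * Matrix.diagonal g) = S * Matrix.diagonal g := by rw [← mul_assoc]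
        _ = Matrix.diagonal (fun i => S i i) * Matrix.diagonal g := by rw [← hSdiagmat]
        _ = Matrix.diagonal (fun i => S i i * g i) := by rw [Matrix.diagonal_mul_diagonal]
        _ = 1 := by rw [show (fun i => S i i * g i) = fun _ => (1:R) from funext hg1, Matrix.diagonal_one]
    · -- (V * diagonal g) * T = 1
      calc (V * Matrix.diagonal g) * T = (V * Matrix.diagonal g) * (S * U) := by rw [hSU]
        _ = V * ((Matrix.diagonal g * Matrix.diagonal (fun i => S i i)) * U) := by
            rw [← hSdiagmat]; noncomm_ring
        _ = V * (Matrix.diagonal (fun i => g i * S i i) * U) := by rw [Matrix.diagonal_mul_diagonal]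
        _ = V * (1 * U) := by rw [show (fun i => g i * S i i) = fun _ => (1:R) from funext hg2, Matrix.diagonal_one]
        _ = 1 := by rw [one_mul, hVU]
    · -- lower entries vanish
      intro i j hji
      rw [← hSH, hSdiagmat, Matrix.diagonal_mul, hHut i j hji, mul_zero]
    · -- degree condition
      intro i j hij
      have h1 := hsol.2 i j (ne_of_lt hij)
      have h2 := (hsol.1 j).2
      rw [← h2] at h1
      exact h1
  · -- uniqueness part
    intro T T' hsol hsol'
    obtain ⟨hoff, hdiag, hSU, hSH⟩ := struct T hsol
    obtain ⟨hoff', hdiag', hSU', hSH'⟩ := struct T' hsol'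
    set S := T * V with hSdef
    set S' := T' * V with hS'def
    have hu : ∀ i, IsUnit (S i i) := fun i => hunit _ (hdiag i)
    have hSdiagmat : S = Matrix.diagonal (fun i => S i i) := by
      ext i j
      by_cases hij : i = j
      · subst hij; rw [Matrix.diagonal_apply_eq]
      · rw [Matrix.diagonal_apply_ne _ hij]
        exact hoff i j (fun hc => hij hc.symm)
    have hS'diagmat : S' = Matrix.diagonal (fun i => S' i i) := by
      ext i j
      by_cases hij : i = j
      · subst hij; rw [Matrix.diagonal_apply_eq]
      · rw [Matrix.diagonal_apply_ne _ hij]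
        exact hoff' i j (fun hc => hij hc.symm)
    set g : Fin n → R := fun i => ((hu i).unit⁻¹ : Rˣ) with hgdef
    have hg1 : ∀ i, S i i * g i = 1 := by
      intro i
      have := (hu i).unit.mul_inv
      rwa [(hu i).unit_spec] at this
    have hg2 : ∀ i, g i * S i i = 1 := by
      intro i
      have := (hu i).unit.inv_mul
      rwa [(hu i).unit_spec] at this
    have hgdeg : ∀ i, degD (g i) = 0 := by
      intro i
      have h0 : degD (S i i) + degD (g i) = 0 := by
        rw [← hmul, hg1 i]
        exact deg_one degD hbot hmul
      exact (wb_eq_zero_of_add_eq_zero _ _ h0).2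
    refine ⟨Matrix.diagonal (fun i => S' i i * g i), ?_, ?_, ?_⟩
    · intro i j hij
      exact Matrix.diagonal_apply_ne _ hij
    · intro i
      constructor
      · rw [Matrix.diagonal_apply_eq]
        exact ((hunit _ (hdiag' i)).mul ((hu i).unit⁻¹).isUnit)
      · rw [Matrix.diagonal_apply_eq, hmul, hdiag' i, hgdeg i, add_zero]
    · calc T' = S' * U := hSU'.symm
        _ = Matrix.diagonal (fun i => S' i i) * U := by rw [← hS'diagmat]
        _ = Matrix.diagonal (fun i => S' i i * g i * S i i) * U := by
            have hfe : (fun i => S' i i * g i * S i i) = fun i => S' i i :=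
              funext fun i => by rw [mul_assoc, hg2 i, mul_one]
            rw [hfe]
        _ = (Matrix.diagonal (fun i => S' i i * g i) * Matrix.diagonal (fun i => S i i)) * U := by
            rw [Matrix.diagonal_mul_diagonal]
        _ = Matrix.diagonal (fun i => S' i i * g i) * (S * U) := by
            rw [← hSdiagmat, mul_assoc]
        _ = Matrix.diagonal (fun i => S' i i * g i) * T := by rw [hSU]
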